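/- Let K be a field, let n, p, d be positive natural numbers with n ≥ p, and let W be a d-dimensional K-subspace of A = K⟨x,y⟩ spanned by d nonempty words over x and y, each of length at most p. Then there is a K-subspace Y of A(n) whose dimension is at most (n+1)^d·(2p^2)·4^p such that A·y^{2n}·A ⊆ Σ_{k=0}^{∞} A(kn)·Y·A for every y ∈ W. -/
import Mathlib


open Module

noncomputable section

/-- The free associative algebra `K⟨x,y⟩` on two generators. -/
abbrev FA (K : Type*) [Field K] := FreeAlgebra K (Fin 2)

/-- The element of `K⟨x,y⟩` given by a word (a list of letters). -/
def wordOf (K : Type*) [Field K] (l : List (Fin 2)) : FA K :=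
  (l.map (FreeAlgebra.ι K)).prod

/-- `a` is a word of length `n` over the two generators. -/
def IsWord (K : Type*) [Field K] (n : ℕ) (a : FA K) : Prop :=
  ∃ l : List (Fin 2), l.length = n ∧ a = wordOf K l

/-- `A(n)`: the span of all words of length `n`. -/
def Aspan (K : Type*) [Field K] (n : ℕ) : Submodule K (FA K) :=
  Submodule.span K {a | IsWord K n a}

open Finset

namespace L41
variable {K : Type*} [Field K]
lemma wordOf_nil : wordOf K [] = 1 := rfl
lemma wordOf_append (a b : List (Fin 2)) :
    wordOf K (a ++ b) = wordOf K a * wordOf K b := by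
  simp [wordOf, List.prod_append]

lemma wordOf_mem_Aspan (l : List (Fin 2)) : wordOf K l ∈ Aspan K l.length :=
  Submodule.subset_span ⟨l, rfl, rfl⟩

lemma Aspan_mul_le (a b : ℕ) : Aspan K a * Aspan K b ≤ Aspan K (a + b) := by
  rw [Aspan, Aspan, Submodule.span_mul_span]
  apply Submodule.span_le.2
  rintro z ⟨x, ⟨lx, hlx, rfl⟩, y, ⟨ly, hly, rfl⟩, rfl⟩
  exact Submodule.subset_span ⟨lx ++ ly, by simp [hlx, hly], (wordOf_append lx ly).symm⟩

lemma mul_mem_Aspan {a b : ℕ} {x z : FA K} (hx : x ∈ Aspan K a) (hz : z ∈ Aspan K b) :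
    x * z ∈ Aspan K (a + b) :=
  Aspan_mul_le a b (Submodule.mul_mem_mul hx hz)

lemma top_eq_span_words :
    (⊤ : Submodule K (FA K)) = Submodule.span K {a | ∃ l, a = wordOf K l} := by
  refine le_antisymm ?_ le_top
  intro z _
  induction z using FreeAlgebra.induction with
  | grade0 r =>
      have : (algebraMap K (FA K)) r = r • wordOf K [] := by
        simp [wordOf_nil, Algebra.algebraMap_eq_smul_one]
      rw [this]
      exact Submodule.smul_mem _ _ (Submodule.subset_span ⟨[], rfl⟩)
  | grade1 x => exact Submodule.subset_span ⟨[x], by simp [wordOf]⟩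
  | mul a b ha hb =>
      have h : Submodule.span K {a : FA K | ∃ l, a = wordOf K l} *
          Submodule.span K {a : FA K | ∃ l, a = wordOf K l} ≤
          Submodule.span K {a : FA K | ∃ l, a = wordOf K l} := by
        rw [Submodule.span_mul_span]
        apply Submodule.span_le.2
        rintro z ⟨x, ⟨lx, rfl⟩, y, ⟨ly, rfl⟩, rfl⟩
        exact Submodule.subset_span ⟨lx ++ ly, (wordOf_append lx ly).symm⟩
      exact h (Submodule.mul_mem_mul (ha trivial) (hb trivial))
  | add a b ha hb => exact Submodule.add_mem _ (ha trivial) (hb trivial)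

section core

variable {d : ℕ} (l : Fin d → List (Fin 2)) (c : Fin d → K)

variable (K) in
/-- product of the words indexed by `σ` -/
def wp {m : ℕ} (σ : Fin m → Fin d) : FA K :=
  wordOf K ((List.ofFn fun j => l (σ j)).flatten)

def coef {m : ℕ} (σ : Fin m → Fin d) : K := ∏ j, c (σ j)

def wt {m : ℕ} (σ : Fin m → Fin d) : ℕ := ∑ j, (l (σ j)).length

def Sm (m g : ℕ) : FA K :=
  ∑ σ ∈ univ.filter (fun σ : Fin m → Fin d => wt l σ = g), coef c σ • wp K l σ

def yc (h : ℕ) : FA K :=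
  ∑ i ∈ univ.filter (fun i => (l i).length = h), c i • wordOf K (l i)

def B (h : ℕ) : FA K :=
  ∑ i ∈ univ.filter (fun i => h < (l i).length), c i • wordOf K (l i)

def yy : FA K := ∑ i, c i • wordOf K (l i)

lemma wp_zero (σ : Fin 0 → Fin d) : wp K l σ = 1 := by
  unfold wp
  rw [List.ofFn_zero, List.flatten_nil, wordOf_nil]

lemma wp_cons {m : ℕ} (i : Fin d) (σ : Fin m → Fin d) :
    wp K l (Fin.cons i σ) = wordOf K (l i) * wp K l σ := by
  rw [wp, wp, List.ofFn_succ]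
  simp only [Fin.cons_zero, Fin.cons_succ, List.flatten_cons, wordOf_append]

lemma wp_snoc {m : ℕ} (σ : Fin m → Fin d) (i : Fin d) :
    wp K l (Fin.snoc σ i) = wp K l σ * wordOf K (l i) := by
  rw [wp, wp, List.ofFn_succ']
  simp only [Fin.snoc_castSucc, Fin.snoc_last, List.concat_eq_append, List.flatten_append,
    List.flatten_cons, List.flatten_nil, List.append_nil, wordOf_append]

lemma coef_cons {m : ℕ} (i : Fin d) (σ : Fin m → Fin d) :
    coef c (Fin.cons i σ) = c i * coef c σ := by
  simp [coef, Fin.prod_univ_succ]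

lemma coef_snoc {m : ℕ} (σ : Fin m → Fin d) (i : Fin d) :
    coef c (Fin.snoc σ i) = coef c σ * c i := by
  simp [coef, Fin.prod_univ_castSucc]

lemma wt_snoc {m : ℕ} (σ : Fin m → Fin d) (i : Fin d) :
    wt l (Fin.snoc σ i) = wt l σ + (l i).length := by
  simp [wt, Fin.sum_univ_castSucc]

lemma pow_expand (m : ℕ) :
    (yy l c) ^ m = ∑ σ : Fin m → Fin d, coef c σ • wp K l σ := by
  induction m with
  | zero =>
      rw [pow_zero, Fintype.sum_unique, wp_zero l]
      simp [coef]
  | succ m ih =>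
      rw [pow_succ', ih, yy, Finset.sum_mul_sum]
      rw [← Fintype.sum_prod_type']
      apply Fintype.sum_equiv (Fin.consEquiv (fun _ => Fin d))
      intro ⟨i, σ⟩
      show (c i • wordOf K (l i)) * (coef c σ • wp K l σ) = _
      have he : (Fin.consEquiv (fun _ => Fin d)) (⟨i, σ⟩ : Fin d × (Fin m → Fin d))
          = Fin.cons i σ := rfl
      rw [he, coef_cons, wp_cons, smul_mul_smul_comm]


lemma wt_ge (hl : ∀ i, l i ≠ []) {m : ℕ} (σ : Fin m → Fin d) : m ≤ wt l σ := by
  calc m = ∑ _j : Fin m, 1 := by simp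
  _ ≤ _ := Finset.sum_le_sum fun j _ =>
      Nat.one_le_iff_ne_zero.2 (by simpa using hl (σ j))

lemma Sm_eq_zero (hl : ∀ i, l i ≠ []) {m g : ℕ} (h : g < m) : Sm l c m g = 0 := by
  rw [Sm, Finset.filter_eq_empty_iff.2, Finset.sum_empty]
  intro σ _
  exact fun hs => absurd (hs ▸ wt_ge l hl σ) (by omega)

lemma Sm_zero_zero : Sm l c 0 0 = 1 := by
  rw [Sm]
  rw [show (univ.filter fun σ : Fin 0 → Fin d => wt l σ = 0) = univ from
    Finset.filter_true_of_mem (fun σ _ => by simp [wt])]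
  rw [Fintype.sum_unique, wp_zero l]
  simp [coef]

lemma Sm_zero_pos {g : ℕ} (hg : 0 < g) : Sm l c 0 g = 0 := by
  rw [Sm, Finset.filter_eq_empty_iff.2, Finset.sum_empty]
  intro σ _
  simp [wt]
  omega

lemma B_zero (hl : ∀ i, l i ≠ []) : B l c 0 = yy l c := by
  rw [B, yy, Finset.filter_true_of_mem (fun i _ => List.length_pos_iff.2 (hl i))]

lemma B_split (h : ℕ) : B l c h = yc l c (h + 1) + B l c (h + 1) := by
  rw [B, yc, B, ← Finset.sum_filter_add_sum_filter_not (univ.filter fun i => h < (l i).length)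
    (fun i => (l i).length = h + 1)]
  congr 1
  · congr 1
    ext i
    simp only [Finset.mem_filter, Finset.mem_univ, true_and]
    omega
  · congr 1
    ext i
    simp only [Finset.mem_filter, Finset.mem_univ, true_and]
    omega

lemma Sm_homog {m g : ℕ} : Sm l c m g ∈ Aspan K g := by
  apply Submodule.sum_mem
  intro σ hσ
  apply Submodule.smul_mem
  apply Submodule.subset_span
  refine ⟨(List.ofFn fun j => l (σ j)).flatten, ?_, rfl⟩
  simp only [Finset.mem_filter] at hσ
  rw [List.length_flatten, List.map_ofFn, List.sum_ofFn]
  exact hσ.2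

lemma Sm_snoc (hl : ∀ i, l i ≠ []) (m f : ℕ) :
    Sm l c (m + 1) (f + 1) = ∑ g ∈ Finset.range (f + 1), Sm l c m g * yc l c (f + 1 - g) := by
  have key : ∀ (σ : Fin m → Fin d) (i : Fin d),
      (∑ g ∈ Finset.range (f + 1),
        (if wt l σ = g then coef c σ • wp K l σ else 0) *
          (if (l i).length = f + 1 - g then c i • wordOf K (l i) else 0))
      = if wt l σ + (l i).length = f + 1 then
          (coef c σ • wp K l σ) * (c i • wordOf K (l i)) else 0 := by
    intro σ i
    by_cases hc : wt l σ + (l i).length = f + 1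
    · have hlen : 0 < (l i).length := List.length_pos_iff.2 (hl i)
      have hmem : wt l σ ∈ Finset.range (f + 1) := by rw [Finset.mem_range]; omega
      rw [Finset.sum_eq_single_of_mem (wt l σ) hmem
        (fun g _ hne => by rw [if_neg (fun h => hne h.symm), zero_mul])]
      rw [if_pos rfl, if_pos (by omega), if_pos hc]
    · rw [if_neg hc]
      apply Finset.sum_eq_zero
      intro g hg
      rw [Finset.mem_range] at hg
      by_cases h1 : wt l σ = g
      · rw [if_pos h1, if_neg (by omega), mul_zero]
      · rw [if_neg h1, zero_mul]
  calc Sm l c (m + 1) (f + 1)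
      = ∑ τ : Fin (m + 1) → Fin d,
          if wt l τ = f + 1 then coef c τ • wp K l τ else 0 := by
        rw [Sm, Finset.sum_filter]
    _ = ∑ q : Fin d × (Fin m → Fin d),
          if wt l q.2 + (l q.1).length = f + 1 then
            (coef c q.2 • wp K l q.2) * (c q.1 • wordOf K (l q.1)) else 0 := by
        rw [← Fintype.sum_equiv (Fin.snocEquiv (fun _ => Fin d))
          (fun q : Fin d × (Fin m → Fin d) =>
            if wt l (Fin.snoc q.2 q.1) = f + 1 then
              coef c (Fin.snoc q.2 q.1) • wp K l (Fin.snoc q.2 q.1) else 0)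
          (fun τ => if wt l τ = f + 1 then coef c τ • wp K l τ else 0)
          (fun q => rfl)]
        apply Finset.sum_congr rfl
        intro q _
        rw [wt_snoc, coef_snoc, wp_snoc, smul_mul_smul_comm]
    _ = ∑ i : Fin d, ∑ σ : Fin m → Fin d,
          if wt l σ + (l i).length = f + 1 then
            (coef c σ • wp K l σ) * (c i • wordOf K (l i)) else 0 :=
        Fintype.sum_prod_type' (f := fun (i : Fin d) (σ : Fin m → Fin d) =>
          if wt l σ + (l i).length = f + 1 then
            (coef c σ • wp K l σ) * (c i • wordOf K (l i)) else 0)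
    _ = ∑ i : Fin d, ∑ σ : Fin m → Fin d, ∑ g ∈ Finset.range (f + 1),
          (if wt l σ = g then coef c σ • wp K l σ else 0) *
            (if (l i).length = f + 1 - g then c i • wordOf K (l i) else 0) := by
        apply Finset.sum_congr rfl; intro i _
        apply Finset.sum_congr rfl; intro σ _
        exact (key σ i).symm
    _ = ∑ i : Fin d, ∑ g ∈ Finset.range (f + 1), ∑ σ : Fin m → Fin d,
          (if wt l σ = g then coef c σ • wp K l σ else 0) *
            (if (l i).length = f + 1 - g then c i • wordOf K (l i) else 0) := by
        exact Finset.sum_congr rfl fun i _ => Finset.sum_comm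
    _ = ∑ g ∈ Finset.range (f + 1), ∑ i : Fin d, ∑ σ : Fin m → Fin d,
          (if wt l σ = g then coef c σ • wp K l σ else 0) *
            (if (l i).length = f + 1 - g then c i • wordOf K (l i) else 0) :=
        Finset.sum_comm
    _ = ∑ g ∈ Finset.range (f + 1), ∑ σ : Fin m → Fin d, ∑ i : Fin d,
          (if wt l σ = g then coef c σ • wp K l σ else 0) *
            (if (l i).length = f + 1 - g then c i • wordOf K (l i) else 0) := by
        exact Finset.sum_congr rfl fun g _ => Finset.sum_comm
    _ = ∑ g ∈ Finset.range (f + 1), Sm l c m g * yc l c (f + 1 - g) := by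
        apply Finset.sum_congr rfl
        intro g _
        rw [Sm, yc, Finset.sum_filter, Finset.sum_filter, Finset.sum_mul_sum]


lemma dagger (hl : ∀ i, l i ≠ []) (f : ℕ) :
    ∀ j : ℕ, f < j → (yy l c) ^ j = ∑ m ∈ Finset.range j, ∑ g ∈ Finset.range (f + 1),
      Sm l c m g * B l c (f - g) * (yy l c) ^ (j - 1 - m) := by
  induction f with
  | zero =>
      intro j hj
      rw [eq_comm]
      calc ∑ m ∈ Finset.range j, ∑ g ∈ Finset.range 1,
            Sm l c m g * B l c (0 - g) * (yy l c) ^ (j - 1 - m)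
          = ∑ m ∈ Finset.range j, Sm l c m 0 * B l c 0 * (yy l c) ^ (j - 1 - m) := by
            apply Finset.sum_congr rfl; intro m _
            rw [Finset.sum_range_one]
        _ = Sm l c 0 0 * B l c 0 * (yy l c) ^ (j - 1 - 0) := by
            apply Finset.sum_eq_single_of_mem 0 (Finset.mem_range.2 (by omega))
            intro m _ hm
            rw [Sm_eq_zero l c hl (by omega), zero_mul, zero_mul]
        _ = (yy l c) ^ j := by
            rw [Sm_zero_zero, B_zero l c hl, one_mul, ← pow_succ']
            congr 1
            omega
  | succ f ih =>
      intro j hj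
      have hij := ih j (by omega)
      rw [eq_comm]
      set P : ℕ → FA K := fun m => (yy l c) ^ (j - 1 - m) with hP
      set A : ℕ → FA K := fun m => Sm l c m (f + 1) * (yy l c) ^ (j - m) with hA
      calc ∑ m ∈ Finset.range j, ∑ g ∈ Finset.range (f + 1 + 1),
            Sm l c m g * B l c (f + 1 - g) * P m
          = ∑ m ∈ Finset.range j,
              ((∑ g ∈ Finset.range (f + 1), Sm l c m g * B l c (f - g) * P m)
                + (A m - A (m + 1))) := by
            apply Finset.sum_congr rfl; intro m hm
            rw [Finset.mem_range] at hm
            rw [Finset.sum_range_succ]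
            have h1 : ∀ g ∈ Finset.range (f + 1),
                Sm l c m g * B l c (f + 1 - g) * P m
                  = Sm l c m g * B l c (f - g) * P m
                    - Sm l c m g * yc l c (f + 1 - g) * P m := by
              intro g hg
              rw [Finset.mem_range] at hg
              have e1 : f - g + 1 = f + 1 - g := by omega
              have hb : B l c (f + 1 - g) = B l c (f - g) - yc l c (f + 1 - g) := by
                rw [← e1, B_split l c (f - g), e1]
                abel
              rw [hb, mul_sub, sub_mul]
            rw [Finset.sum_congr rfl h1, Finset.sum_sub_distrib]
            have h2 : ∑ g ∈ Finset.range (f + 1), Sm l c m g * yc l c (f + 1 - g) * P m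
                = A (m + 1) := by
              rw [← Finset.sum_mul, ← Sm_snoc l c hl]
              simp only [hA, hP]
              rw [show j - (m + 1) = j - 1 - m from by omega]
            have h3 : Sm l c m (f + 1) * B l c 0 * P m = A m := by
              simp only [hA, hP]
              rw [B_zero l c hl, mul_assoc, ← pow_succ',
                show j - 1 - m + 1 = j - m from by omega]
            rw [Nat.sub_self] at *
            rw [h2, h3]
            abel
        _ = (∑ m ∈ Finset.range j, ∑ g ∈ Finset.range (f + 1),
              Sm l c m g * B l c (f - g) * P m)
            + ∑ m ∈ Finset.range j, (A m - A (m + 1)) := Finset.sum_add_distrib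
        _ = (yy l c) ^ j + (A 0 - A j) := by rw [← hij, Finset.sum_range_sub' A]
        _ = (yy l c) ^ j := by
            have hA0 : A 0 = 0 := by simp only [hA]; rw [Sm_zero_pos l c (by omega), zero_mul]
            have hAj : A j = 0 := by simp only [hA]; rw [Sm_eq_zero l c hl (by omega), zero_mul]
            rw [hA0, hAj]
            abel

def cnt {m : ℕ} (σ : Fin m → Fin d) (i : Fin d) : ℕ :=
  (univ.filter fun j => σ j = i).card

variable (K) in
def Sym (n : ℕ) (e : Fin d → Fin (n + 1)) : FA K :=
  ∑ σ ∈ univ.filter (fun σ : Fin (∑ i, (e i : ℕ)) → Fin d => ∀ i, cnt σ i = (e i : ℕ)),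
    wp K l σ

def wten {n : ℕ} (e : Fin d → Fin (n + 1)) : ℕ := ∑ i, (e i : ℕ) * (l i).length

lemma cnt_sum {m : ℕ} (σ : Fin m → Fin d) : ∑ i, cnt σ i = m := by
  unfold cnt
  rw [← Finset.card_eq_sum_card_fiberwise (fun j _ => mem_univ (σ j))]
  simp

lemma wt_of_cnt {m : ℕ} (σ : Fin m → Fin d) : wt l σ = ∑ i, cnt σ i * (l i).length := by
  unfold wt cnt
  rw [← Finset.sum_fiberwise_of_maps_to (fun j _ => mem_univ (σ j))
    (fun j => (l (σ j)).length)]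
  apply Finset.sum_congr rfl
  intro i _
  rw [Finset.sum_congr rfl (fun j hj => by rw [(mem_filter.1 hj).2]), Finset.sum_const,
    smul_eq_mul]

lemma coef_of_cnt {m : ℕ} (σ : Fin m → Fin d) : coef c σ = ∏ i, c i ^ cnt σ i := by
  unfold coef cnt
  rw [← Finset.prod_fiberwise_of_maps_to (fun j _ => mem_univ (σ j)) (fun j => c (σ j))]
  apply Finset.prod_congr rfl
  intro i _
  rw [Finset.prod_congr rfl (fun j hj => by rw [(mem_filter.1 hj).2]), Finset.prod_const]

lemma Sym_homog {n : ℕ} (e : Fin d → Fin (n + 1)) :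
    Sym K l n e ∈ Aspan K (wten l e) := by
  apply Submodule.sum_mem
  intro σ hσ
  apply Submodule.subset_span
  refine ⟨(List.ofFn fun j => l (σ j)).flatten, ?_, rfl⟩
  simp only [Finset.mem_filter] at hσ
  rw [List.length_flatten, List.map_ofFn, List.sum_ofFn]
  show wt l σ = wten l e
  rw [wt_of_cnt, wten]
  exact Finset.sum_congr rfl fun i _ => by rw [hσ.2 i]

lemma Sm_group (n : ℕ) {m g : ℕ} (hm : m ≤ n) :
    Sm l c m g = ∑ e ∈ univ.filter
        (fun e : Fin d → Fin (n + 1) => (∑ i, (e i : ℕ)) = m ∧ wten l e = g),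
      (∏ i, c i ^ (e i : ℕ)) • Sym K l n e := by
  have hcnt : ∀ σ : Fin m → Fin d, ∀ i, cnt σ i < n + 1 := by
    intro σ i
    have h2 : cnt σ i ≤ ∑ i', cnt σ i' :=
      Finset.single_le_sum (fun _ _ => Nat.zero_le _) (mem_univ i)
    rw [cnt_sum σ] at h2
    omega
  set cntF : (Fin m → Fin d) → (Fin d → Fin (n + 1)) :=
    fun σ i => ⟨cnt σ i, hcnt σ i⟩ with hcntF
  rw [Sm, ← Finset.sum_fiberwise_of_maps_to
    (fun (σ : Fin m → Fin d) (_ : σ ∈ univ.filter fun σ => wt l σ = g) => mem_univ (cntF σ))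
    (fun σ => coef c σ • wp K l σ)]
  rw [← Finset.sum_subset (Finset.filter_subset
      (fun e : Fin d → Fin (n + 1) => (∑ i, (e i : ℕ)) = m ∧ wten l e = g) univ) ?hz]
  case hz =>
    intro e _ he
    apply Finset.sum_eq_zero
    intro σ hσ
    rw [Finset.mem_filter, Finset.mem_filter] at hσ
    obtain ⟨⟨_, hwt⟩, hce⟩ := hσ
    exfalso
    apply he
    rw [Finset.mem_filter]
    have hv : ∀ i, (e i : ℕ) = cnt σ i :=
      fun i => (congrArg Fin.val (congrFun hce i)).symm
    refine ⟨mem_univ _, ?_, ?_⟩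
    · simp only [hv]
      exact cnt_sum σ
    · rw [← hwt, wt_of_cnt, wten]
      exact Finset.sum_congr rfl fun i _ => by rw [hv i]
  apply Finset.sum_congr rfl
  intro e he
  rw [Finset.mem_filter] at he
  obtain ⟨-, he1, he2⟩ := he
  subst he1
  have hfeq : (univ.filter fun σ => wt l σ = g).filter (fun σ => cntF σ = e)
      = univ.filter (fun σ : Fin (∑ i, (e i : ℕ)) → Fin d => ∀ i, cnt σ i = (e i : ℕ)) := by
    ext σ
    simp only [Finset.mem_filter, Finset.mem_univ, true_and]
    constructor
    · rintro ⟨-, hce⟩ i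
      exact congrArg Fin.val (congrFun hce i)
    · intro hv
      constructor
      · rw [← he2, wt_of_cnt, wten]
        exact Finset.sum_congr rfl fun i _ => by rw [hv i]
      · funext i
        exact Fin.ext (hv i)
  rw [hfeq, Sym, Finset.smul_sum]
  apply Finset.sum_congr rfl
  intro σ hσ
  rw [Finset.mem_filter] at hσ
  rw [coef_of_cnt]
  congr 1
  exact Finset.prod_congr rfl fun i _ => by rw [hσ.2 i]


section R

variable {n p : ℕ} (Y : Submodule K (FA K))

lemma memY_of (hY : ∀ (s t : List (Fin 2)) (e : Fin d → Fin (n + 1)),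
      s.length ≤ p - 1 → t.length ≤ p - 1 → s.length + wten l e + t.length = n →
      wordOf K s * Sym K l n e * wordOf K t ∈ Y)
    {m g : ℕ} (hmn : m ≤ n) (s t : List (Fin 2))
    (hs : s.length ≤ p - 1) (ht : t.length ≤ p - 1)
    (hstg : s.length + g + t.length = n) :
    wordOf K s * Sm l c m g * wordOf K t ∈ Y := by
  rw [Sm_group l c n hmn]
  simp only [Finset.sum_mul, Finset.mul_sum]
  apply Submodule.sum_mem
  intro e he
  rw [Finset.mem_filter] at he
  have heq : wordOf K s * ((∏ i, c i ^ (e i : ℕ)) • Sym K l n e) * wordOf K t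
      = (∏ i, c i ^ (e i : ℕ)) • (wordOf K s * Sym K l n e * wordOf K t) := by
    simp only [mul_smul_comm, smul_mul_assoc]
  rw [heq]
  refine Submodule.smul_mem _ _ (hY s t e hs ht ?_)
  rw [he.2.2]
  omega

lemma lemR (hp : 0 < p) (hpn : p ≤ n)
    (hl : ∀ i, l i ≠ []) (hlp : ∀ i, (l i).length ≤ p)
    (hY : ∀ (s t : List (Fin 2)) (e : Fin d → Fin (n + 1)),
      s.length ≤ p - 1 → t.length ≤ p - 1 → s.length + wten l e + t.length = n →
      wordOf K s * Sym K l n e * wordOf K t ∈ Y)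
    (j : ℕ) (hj : n < j) (s : List (Fin 2)) (hs : s.length ≤ p - 1) (v : FA K) :
    wordOf K s * (yy l c) ^ j * v ∈ Y * (⊤ : Submodule K (FA K)) := by
  set f := n - s.length with hf
  have hsn : s.length ≤ n - 1 := by omega
  have hf1 : 1 ≤ f := by omega
  have hfn : f ≤ n := by omega
  have hfj : f < j := by omega
  rw [dagger l c hl f j hfj]
  simp only [Finset.mul_sum, Finset.sum_mul]
  apply Submodule.sum_mem
  intro m hm
  apply Submodule.sum_mem
  intro g hg
  rw [Finset.mem_range] at hm hg
  by_cases hmg : g < m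
  · rw [Sm_eq_zero l c hl hmg]
    simp only [zero_mul, mul_zero]
    exact Submodule.zero_mem _
  push_neg at hmg
  by_cases hgf : g = f
  · subst hgf
    rw [Nat.sub_self, B_zero l c hl]
    have heq : wordOf K s * (Sm l c m f * yy l c * yy l c ^ (j - 1 - m)) * v
        = (wordOf K s * Sm l c m f * wordOf K []) * (yy l c ^ (j - m) * v) := by
      rw [wordOf_nil, mul_one, mul_assoc (Sm l c m f), ← pow_succ',
        show j - 1 - m + 1 = j - m from by omega]
      simp only [mul_assoc]
    rw [heq]
    exact Submodule.mul_mem_mul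
      (memY_of l c Y hY (by omega) s [] hs (by simp) (by simp; omega)) Submodule.mem_top
  · have hgf' : g < f := by omega
    rw [B]
    simp only [Finset.mul_sum, Finset.sum_mul]
    apply Submodule.sum_mem
    intro i hi
    rw [Finset.mem_filter] at hi
    have hilen : f - g < (l i).length := hi.2
    set t : List (Fin 2) := (l i).take (f - g) with hT
    set u : List (Fin 2) := (l i).drop (f - g) with hU
    have hsplit : wordOf K (l i) = wordOf K t * wordOf K u := by
      rw [← wordOf_append, hT, hU, List.take_append_drop]
    have htlen : t.length = f - g := by
      rw [hT, List.length_take]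
      omega
    have hulen : u.length = (l i).length - (f - g) := by
      rw [hU, List.length_drop]
    have heq : wordOf K s * (Sm l c m g * (c i • wordOf K (l i)) * yy l c ^ (j - 1 - m)) * v
        = c i • ((wordOf K s * Sm l c m g * wordOf K t)
            * (wordOf K u * (yy l c ^ (j - 1 - m) * v))) := by
      rw [hsplit]
      simp only [mul_smul_comm, smul_mul_assoc, mul_assoc]
    rw [heq]
    refine Submodule.smul_mem _ _ (Submodule.mul_mem_mul
      (memY_of l c Y hY (by omega) s t hs ?_ ?_) Submodule.mem_top)
    · rw [htlen]
      have := hlp i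
      omega
    · rw [htlen]
      omega

end R


variable (K) in
def gen (n p : ℕ)
    (j : (Fin p → Fin 2) × (Fin p → Fin 2) × Fin p × Fin p × (Fin d → Fin (n + 1))) : FA K :=
  wordOf K ((List.ofFn j.1).take (j.2.2.1 : ℕ)) * Sym K l n j.2.2.2.2 *
    wordOf K ((List.ofFn j.2.1).take (j.2.2.2.1 : ℕ))

def cond (n p : ℕ) :
    Set ((Fin p → Fin 2) × (Fin p → Fin 2) × Fin p × Fin p × (Fin d → Fin (n + 1))) :=
  {j | ((List.ofFn j.1).take (j.2.2.1 : ℕ)).length + wten l j.2.2.2.2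
    + ((List.ofFn j.2.1).take (j.2.2.2.1 : ℕ)).length = n}

end core

lemma encode {p : ℕ} (s : List (Fin 2)) (h : s.length < p) :
    ∃ (q : Fin p) (f : Fin p → Fin 2), (List.ofFn f).take (q : ℕ) = s ∧ (q : ℕ) = s.length := by
  refine ⟨⟨s.length, h⟩, fun j => s.getD j 0, ?_, rfl⟩
  apply List.ext_getElem
  · simp
    omega
  · intro i h1 h2
    simp only [List.getElem_take, List.getElem_ofFn]
    exact List.getD_eq_getElem s 0 (by simpa using h2)

end L41

open L41 in
/-- **Lemma 4.1 (explicit power `2n`).** Let `W` be a `d`-dimensional subspace of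
`K⟨x,y⟩` spanned by `d` nonempty words of length at most `p`. Then there is a subspace
`Y ⊆ A(n)` of dimension at most `(n+1)^d·(2p²)·4^p` such that
`A·y^{2n}·A ⊆ Σ_{k=0}^∞ A(kn)·Y·A` for every `y ∈ W`. -/
theorem lemma_4_1' {K : Type*} [Field K] (n p d : ℕ)
    (hn : 0 < n) (hp : 0 < p) (hd : 0 < d) (hpn : p ≤ n)
    (w : Fin d → FA K)
    (hword : ∀ i, ∃ l : List (Fin 2), l ≠ [] ∧ l.length ≤ p ∧ w i = wordOf K l)
    (hind : LinearIndependent K w) :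
    ∃ Y : Submodule K (FA K), Y ≤ Aspan K n ∧
      finrank K Y ≤ (n + 1) ^ d * (2 * p ^ 2) * 4 ^ p ∧
      ∀ y ∈ Submodule.span K (Set.range w), ∀ u v : FA K,
        u * y ^ (2 * n) * v ∈ ⨆ k : ℕ, Aspan K (k * n) * Y * (⊤ : Submodule K (FA K)) := by
  classical
  choose l hl1 hl2 hl3 using hword
  set Y : Submodule K (FA K) := Submodule.span K (gen K l n p '' cond l n p) with hYdef
  refine ⟨Y, ?_, ?_, ?_⟩
  · -- Y ≤ Aspan n
    apply Submodule.span_le.2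
    rintro z ⟨j, hc, rfl⟩
    have hm := mul_mem_Aspan (mul_mem_Aspan
      (wordOf_mem_Aspan (K := K) ((List.ofFn j.1).take (j.2.2.1 : ℕ)))
      (Sym_homog (K := K) l j.2.2.2.2))
      (wordOf_mem_Aspan (K := K) ((List.ofFn j.2.1).take (j.2.2.2.1 : ℕ)))
    have hc' : ((List.ofFn j.1).take (j.2.2.1 : ℕ)).length + wten l j.2.2.2.2
        + ((List.ofFn j.2.1).take (j.2.2.2.1 : ℕ)).length = n := hc
    rw [hc'] at hm
    exact hm
  · -- dimension bound
    haveI : Nonempty (Fin p) := ⟨⟨0, hp⟩⟩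
    have hle : Y ≤ Submodule.span K (Set.range (gen K l n p)) :=
      Submodule.span_mono (Set.image_subset_range _ _)
    have hfd : FiniteDimensional K (Submodule.span K (Set.range (gen K l n p))) :=
      FiniteDimensional.span_of_finite K (Set.finite_range _)
    have h2 := finrank_span_finset_le_card (R := K) (Finset.univ.image (gen K l n p))
    rw [Set.finrank] at h2
    have h1 : (↑(Finset.univ.image (gen K l n p)) : Set (FA K)) = Set.range (gen K l n p) := by
      simp
    rw [h1] at h2
    have h3 : finrank K Y ≤ finrank K (Submodule.span K (Set.range (gen K l n p))) :=
      Submodule.finrank_mono hle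
    have h4 : (Finset.univ.image (gen K l n p)).card ≤
        Fintype.card ((Fin p → Fin 2) × (Fin p → Fin 2) × Fin p × Fin p × (Fin d → Fin (n + 1))) :=
      Finset.card_image_le.trans (le_of_eq Finset.card_univ)
    have h5 : Fintype.card ((Fin p → Fin 2) × (Fin p → Fin 2) × Fin p × Fin p
        × (Fin d → Fin (n + 1))) = 2 ^ p * (2 ^ p * (p * (p * (n + 1) ^ d))) := by
      simp [Fintype.card_fun]
    have h6 : 2 ^ p * (2 ^ p * (p * (p * (n + 1) ^ d))) ≤ (n + 1) ^ d * (2 * p ^ 2) * 4 ^ p := by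
      have h7 : (4 : ℕ) ^ p = 2 ^ p * 2 ^ p := by
        rw [show (4 : ℕ) = 2 * 2 from rfl, mul_pow]
      rw [h7]
      calc 2 ^ p * (2 ^ p * (p * (p * (n + 1) ^ d)))
          ≤ 2 * (2 ^ p * (2 ^ p * (p * (p * (n + 1) ^ d)))) :=
            Nat.le_mul_of_pos_left _ (by omega)
        _ = (n + 1) ^ d * (2 * p ^ 2) * (2 ^ p * 2 ^ p) := by ring
    omega
  · -- main containment
    intro y hy u v
    rw [Submodule.mem_span_range_iff_exists_fun] at hy
    obtain ⟨c, hc⟩ := hy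
    have hyy : y = yy l c := by
      rw [← hc, yy]
      exact Finset.sum_congr rfl fun i _ => by rw [hl3 i]
    rw [hyy]
    have hY : ∀ (s t : List (Fin 2)) (e : Fin d → Fin (n + 1)),
        s.length ≤ p - 1 → t.length ≤ p - 1 → s.length + wten l e + t.length = n →
        wordOf K s * Sym K l n e * wordOf K t ∈ Y := by
      intro s t e hs ht hsum
      obtain ⟨q1, f1, hq1, hq1l⟩ := encode (p := p) s (by omega)
      obtain ⟨q2, f2, hq2, hq2l⟩ := encode (p := p) t (by omega)
      apply Submodule.subset_span
      refine ⟨(f1, f2, q1, q2, e), ?_, ?_⟩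
      · show ((List.ofFn f1).take (q1 : ℕ)).length + wten l e
            + ((List.ofFn f2).take (q2 : ℕ)).length = n
        rw [hq1, hq2]
        exact hsum
      · show wordOf K ((List.ofFn f1).take (q1 : ℕ)) * Sym K l n e *
            wordOf K ((List.ofFn f2).take (q2 : ℕ)) = _
        rw [hq1, hq2]
    have hu : u ∈ Submodule.span K {a : FA K | ∃ lu, a = wordOf K lu} := by
      rw [← top_eq_span_words]
      trivial
    induction hu using Submodule.span_induction with
    | mem a ha =>
        obtain ⟨lu, rfl⟩ := ha
        obtain ⟨k, r, hr, hkr⟩ : ∃ k r, r < n ∧ k * n = lu.length + r := by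
          by_cases hmod : lu.length % n = 0
          · exact ⟨lu.length / n, 0, hn, by
              rw [Nat.div_mul_cancel (Nat.dvd_of_mod_eq_zero hmod)]; omega⟩
          · refine ⟨lu.length / n + 1, n - lu.length % n, by omega, ?_⟩
            have h3 := Nat.div_add_mod lu.length n
            have h4 : lu.length % n < n := Nat.mod_lt _ hn
            calc (lu.length / n + 1) * n = n * (lu.length / n) + n := by ring
              _ = lu.length + (n - lu.length % n) := by omega
        rw [dagger l c hl1 r (2 * n) (by omega)]
        simp only [Finset.mul_sum, Finset.sum_mul]
        refine Submodule.sum_mem _ fun m' hm' => Submodule.sum_mem _ fun g hg => ?_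
        rw [Finset.mem_range] at hm' hg
        by_cases hmg : g < m'
        · rw [Sm_eq_zero l c hl1 hmg]
          simp only [zero_mul, mul_zero]
          exact Submodule.zero_mem _
        push_neg at hmg
        by_cases hgr : g = r
        · subst hgr
          rw [Nat.sub_self, B_zero l c hl1]
          have heq : wordOf K lu * (Sm l c m' g * yy l c * yy l c ^ (2 * n - 1 - m')) * v
              = (wordOf K lu * Sm l c m' g) *
                  (wordOf K [] * yy l c ^ (2 * n - m') * v) := by
            rw [wordOf_nil, one_mul, mul_assoc (Sm l c m' g), ← pow_succ',
              show 2 * n - 1 - m' + 1 = 2 * n - m' from by omega]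
            simp only [mul_assoc]
          rw [heq]
          have hA : wordOf K lu * Sm l c m' g ∈ Aspan K (k * n) := by
            have := mul_mem_Aspan (wordOf_mem_Aspan lu) (Sm_homog l c (m := m') (g := g))
            rwa [show lu.length + g = k * n from by omega] at this
          have hR : wordOf K [] * yy l c ^ (2 * n - m') * v ∈ Y * ⊤ :=
            lemR l c Y hp hpn hl1 hl2 hY (2 * n - m') (by omega) [] (by simp) v
          refine (le_iSup (fun k' => Aspan K (k' * n) * Y * (⊤ : Submodule K (FA K))) k) ?_
          rw [mul_assoc]
          exact Submodule.mul_mem_mul hA hR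
        · have hgr' : g < r := by omega
          rw [B]
          simp only [Finset.mul_sum, Finset.sum_mul]
          refine Submodule.sum_mem _ fun i hi => ?_
          rw [Finset.mem_filter] at hi
          have hilen : r - g < (l i).length := hi.2
          have hip := hl2 i
          have hsplit : wordOf K (l i)
              = wordOf K ((l i).take (r - g)) * wordOf K ((l i).drop (r - g)) := by
            rw [← wordOf_append, List.take_append_drop]
          have heq : wordOf K lu *
                (Sm l c m' g * (c i • wordOf K (l i)) * yy l c ^ (2 * n - 1 - m')) * v
              = c i • ((wordOf K lu * Sm l c m' g * wordOf K ((l i).take (r - g))) *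
                  (wordOf K ((l i).drop (r - g)) * yy l c ^ (2 * n - 1 - m') * v)) := by
            rw [hsplit]
            simp only [mul_smul_comm, smul_mul_assoc, mul_assoc]
          rw [heq]
          refine Submodule.smul_mem _ _ ?_
          refine (le_iSup (fun k' => Aspan K (k' * n) * Y * (⊤ : Submodule K (FA K))) k) ?_
          rw [mul_assoc]
          refine Submodule.mul_mem_mul ?_ ?_
          · have := mul_mem_Aspan (mul_mem_Aspan (wordOf_mem_Aspan lu)
              (Sm_homog l c (m := m') (g := g))) (wordOf_mem_Aspan ((l i).take (r - g)))
            rwa [show lu.length + g + ((l i).take (r - g)).length = k * n from by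
              rw [List.length_take]; omega] at this
          · refine lemR l c Y hp hpn hl1 hl2 hY (2 * n - 1 - m') (by omega)
              ((l i).drop (r - g)) ?_ v
            rw [List.length_drop]
            omega
    | zero =>
        simp only [zero_mul]
        exact Submodule.zero_mem _
    | add a b _ _ iha ihb =>
        rw [add_mul, add_mul]
        exact Submodule.add_mem _ iha ihb
    | smul r a _ ih =>
        rw [smul_mul_assoc, smul_mul_assoc]
        exact Submodule.smul_mem _ _ ih

end
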